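/- Let a ∈ ℝ, b ≠ 0, λ ∈ ℝ, C ≠ 0, d̄ ∈ ℝ, and let γ_α, γ_β, γ_ζ > 0 be adaptation gains. Let Proj_α, Proj_β, Proj_ζ be projection operators with respective bounds [α_min, α_max], [β_min, β_max], [ζ_min, ζ_max] and tolerances ε_α, ε_β, ε_ζ, and suppose the ideal parameters α* = (λ − a)/b, β* = 1/(b·C), ζ* = −d̄ satisfy α* ∈ [α_min + ε_α, α_max − ε_α], β* ∈ [β_min + ε_β, β_max − ε_β], ζ* ∈ [ζ_min + ε_ζ, ζ_max − ε_ζ]. Let X, Y, r, α̂, β̂, ζ̂ : ℝ → ℝ be differentiable, set e = X − Y, and suppose for all t ≥ 0: e'(t) = λ·e(t) + b·α̃(t)·X(t) + b·β̃(t)·r(t) + b·ζ̃(t) (where α̃ = α̂ − α*, β̃ = β̂ − β*, ζ̃ = ζ̂ − ζ*), α̂'(t) = γ_α·Proj_α(α̂(t), −sgn(b)·X(t)·e(t)), β̂'(t) = γ_β·Proj_β(β̂(t), −sgn(b)·r(t)·e(t)), and ζ̂'(t) = γ_ζ·Proj_ζ(ζ̂(t), −sgn(b)·e(t)). Then the Lyapunov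 function V(t) = e(t)²/2 + |b|·α̃(t)²/(2γ_α) + |b|·β̃(t)²/(2γ_β) + |b|·ζ̃(t)²/(2γ_ζ) is differentiable and satisfies V'(t) ≤ λ·e(t)² for all t ≥ 0. -/

import Mathlib

/-- The convex function `h(θ) = ((θ − θmin − ε)(θ − θmax + ε)) / ((θmax − θmin − ε)·ε)`. -/
noncomputable def hFun (θmin θmax ε θ : ℝ) : ℝ :=
  ((θ - θmin - ε) * (θ - θmax + ε)) / ((θmax - θmin - ε) * ε)

/-- The projection operator `Proj(θ, Y)`. -/
noncomputable def projOp (θmin θmax ε θ Y : ℝ) : ℝ :=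
  if 0 < hFun θmin θmax ε θ ∧ 0 < Y * deriv (hFun θmin θmax ε) θ then
    Y - Y * hFun θmin θmax ε θ
  else Y

lemma deriv_hFun (θmin θmax ε θ : ℝ) :
    deriv (hFun θmin θmax ε) θ
      = ((θ - θmin - ε) + (θ - θmax + ε)) / ((θmax - θmin - ε) * ε) := by
  have h1 : HasDerivAt (fun θ : ℝ => θ - θmin - ε) 1 θ :=
    ((hasDerivAt_id θ).sub_const θmin).sub_const ε
  have h2 : HasDerivAt (fun θ : ℝ => θ - θmax + ε) 1 θ :=
    ((hasDerivAt_id θ).sub_const θmax).add_const ε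
  have h3 := (h1.mul h2).div_const ((θmax - θmin - ε) * ε)
  have h4 : HasDerivAt (hFun θmin θmax ε)
      ((1 * (θ - θmax + ε) + (θ - θmin - ε) * 1) / ((θmax - θmin - ε) * ε)) θ := h3
  rw [h4.deriv]; ring

lemma proj_key (θmin θmax ε θstar θ Y : ℝ) (hε0 : 0 < ε) (hε : ε < (θmax - θmin) / 2)
    (hstar : θstar ∈ Set.Icc (θmin + ε) (θmax - ε)) :
    (θ - θstar) * projOp θmin θmax ε θ Y ≤ (θ - θstar) * Y := by
  unfold projOp
  split
  · rename_i hc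
    obtain ⟨hh, hY⟩ := hc
    have hD : 0 < (θmax - θmin - ε) * ε := by nlinarith
    rw [deriv_hFun] at hY
    have hnum : 0 < (θ - θmin - ε) * (θ - θmax + ε) := by
      have h5 : 0 < hFun θmin θmax ε θ * ((θmax - θmin - ε) * ε) := mul_pos hh hD
      unfold hFun at h5
      rwa [div_mul_cancel₀ _ hD.ne'] at h5
    have hY' : 0 < Y * ((θ - θmin - ε) + (θ - θmax + ε)) := by
      have h6 := mul_pos hY hD
      rw [mul_assoc, div_mul_cancel₀ _ hD.ne'] at h6
      exact h6
    obtain ⟨hs1, hs2⟩ := hstar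
    have key : 0 ≤ (θ - θstar) * Y := by
      rcases lt_trichotomy θ (θmin + ε) with h | h | h
      · have hYneg : Y < 0 := by nlinarith
        nlinarith
      · exfalso; nlinarith
      · rcases le_or_gt θ (θmax - ε) with h2 | h2
        · exfalso; nlinarith
        · have hYpos : 0 < Y := by nlinarith
          nlinarith
    nlinarith [mul_nonneg key hh.le]
  · exact le_refl _

/-- With the projection-based adaptive laws, the Lyapunov function
`V = e²/2 + |b|·α̃²/(2γ_α) + |b|·β̃²/(2γ_β) + |b|·ζ̃²/(2γ_ζ)` is differentiable and its
derivative satisfies `V'(t) ≤ λ·e(t)²` for all `t ≥ 0`. -/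
theorem lyapunov_derivative_bound
    (a b lam C dbar γα γβ γζ : ℝ) (hb : b ≠ 0) (hC : C ≠ 0)
    (hγα : 0 < γα) (hγβ : 0 < γβ) (hγζ : 0 < γζ)
    (αmin αmax εα : ℝ) (hαlt : αmin < αmax) (hεα0 : 0 < εα) (hεα : εα < (αmax - αmin) / 2)
    (βmin βmax εβ : ℝ) (hβlt : βmin < βmax) (hεβ0 : 0 < εβ) (hεβ : εβ < (βmax - βmin) / 2)
    (ζmin ζmax εζ : ℝ) (hζlt : ζmin < ζmax) (hεζ0 : 0 < εζ) (hεζ : εζ < (ζmax - ζmin) / 2)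
    (hαstar : (lam - a) / b ∈ Set.Icc (αmin + εα) (αmax - εα))
    (hβstar : 1 / (b * C) ∈ Set.Icc (βmin + εβ) (βmax - εβ))
    (hζstar : -dbar ∈ Set.Icc (ζmin + εζ) (ζmax - εζ))
    (X Y r αh βh ζh : ℝ → ℝ)
    (hX : Differentiable ℝ X) (hY : Differentiable ℝ Y) (hr : Differentiable ℝ r)
    (e : ℝ → ℝ) (he : e = fun t => X t - Y t)
    (herr : ∀ t ≥ (0:ℝ), HasDerivAt e
      (lam * e t + b * (αh t - (lam - a) / b) * X t
        + b * (βh t - 1 / (b * C)) * r t + b * (ζh t - (-dbar))) t)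
    (hαdot : ∀ t ≥ (0:ℝ), HasDerivAt αh
      (γα * projOp αmin αmax εα (αh t) (-Real.sign b * (X t * e t))) t)
    (hβdot : ∀ t ≥ (0:ℝ), HasDerivAt βh
      (γβ * projOp βmin βmax εβ (βh t) (-Real.sign b * (r t * e t))) t)
    (hζdot : ∀ t ≥ (0:ℝ), HasDerivAt ζh
      (γζ * projOp ζmin ζmax εζ (ζh t) (-Real.sign b * e t)) t)
    (V : ℝ → ℝ)
    (hV : V = fun t => e t ^ 2 / 2 + |b| * (αh t - (lam - a) / b) ^ 2 / (2 * γα)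
      + |b| * (βh t - 1 / (b * C)) ^ 2 / (2 * γβ)
      + |b| * (ζh t - (-dbar)) ^ 2 / (2 * γζ)) :
    ∀ t ≥ (0:ℝ), DifferentiableAt ℝ V t ∧ deriv V t ≤ lam * e t ^ 2 := by
  intro t ht
  have hE := herr t ht
  have hA := hαdot t ht
  have hB := hβdot t ht
  have hZ := hζdot t ht
  set e' := lam * e t + b * (αh t - (lam - a) / b) * X t
        + b * (βh t - 1 / (b * C)) * r t + b * (ζh t - (-dbar)) with he'
  set Pα := projOp αmin αmax εα (αh t) (-Real.sign b * (X t * e t)) with hPα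
  set Pβ := projOp βmin βmax εβ (βh t) (-Real.sign b * (r t * e t)) with hPβ
  set Pζ := projOp ζmin ζmax εζ (ζh t) (-Real.sign b * e t) with hPζ
  have hVd : HasDerivAt V
      (e t * e' + |b| * ((αh t - (lam - a) / b) * Pα)
        + |b| * ((βh t - 1 / (b * C)) * Pβ) + |b| * ((ζh t - (-dbar)) * Pζ)) t := by
    rw [hV]
    have h1 := (hE.pow 2).div_const 2
    have h2 := (((hA.sub_const ((lam - a) / b)).pow 2).const_mul |b|).div_const (2 * γα)
    have h3 := (((hB.sub_const (1 / (b * C))).pow 2).const_mul |b|).div_const (2 * γβ)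
    have h4 := (((hZ.sub_const (-dbar)).pow 2).const_mul |b|).div_const (2 * γζ)
    have h5 := ((h1.add h2).add h3).add h4
    refine h5.congr_deriv ?_
    push_cast
    field_simp
  refine ⟨hVd.differentiableAt, ?_⟩
  rw [hVd.deriv]
  have habs : Real.sign b * |b| = b := by
    rcases hb.lt_or_gt with h | h
    · rw [Real.sign_of_neg h, abs_of_neg h]; ring
    · rw [Real.sign_of_pos h, abs_of_pos h]; ring
  have k1 : |b| * ((αh t - (lam - a) / b) * Pα)
      ≤ -b * ((αh t - (lam - a) / b) * (X t * e t)) := by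
    have h := mul_le_mul_of_nonneg_left
      (proj_key αmin αmax εα ((lam - a) / b) (αh t) (-Real.sign b * (X t * e t))
        hεα0 hεα hαstar) (abs_nonneg b)
    calc |b| * ((αh t - (lam - a) / b) * Pα) ≤ _ := h
      _ = -b * ((αh t - (lam - a) / b) * (X t * e t)) := by
        linear_combination (-(αh t - (lam - a) / b) * (X t * e t)) * habs
  have k2 : |b| * ((βh t - 1 / (b * C)) * Pβ)
      ≤ -b * ((βh t - 1 / (b * C)) * (r t * e t)) := by
    have h := mul_le_mul_of_nonneg_left
      (proj_key βmin βmax εβ (1 / (b * C)) (βh t) (-Real.sign b * (r t * e t))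
        hεβ0 hεβ hβstar) (abs_nonneg b)
    calc |b| * ((βh t - 1 / (b * C)) * Pβ) ≤ _ := h
      _ = -b * ((βh t - 1 / (b * C)) * (r t * e t)) := by
        linear_combination (-(βh t - 1 / (b * C)) * (r t * e t)) * habs
  have k3 : |b| * ((ζh t - (-dbar)) * Pζ) ≤ -b * ((ζh t - (-dbar)) * e t) := by
    have h := mul_le_mul_of_nonneg_left
      (proj_key ζmin ζmax εζ (-dbar) (ζh t) (-Real.sign b * e t)
        hεζ0 hεζ hζstar) (abs_nonneg b)
    calc |b| * ((ζh t - (-dbar)) * Pζ) ≤ _ := h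
      _ = -b * ((ζh t - (-dbar)) * e t) := by
        linear_combination (-(ζh t - (-dbar)) * e t) * habs
  rw [he']
  nlinarith [k1, k2, k3]
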